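/- Let I = (𝔼, D, c, f) be a CMP instance whose objective f is of type sum, product, or bottleneck, and let e ∈ 𝔼 be an element that lies in every optimal solution of I. Then l'(I,e) ∈ {0, ∞}; moreover, if f is of type sum or of type product, then l'(I,e) = 0. -/
import Mathlib


open scoped ENNReal BigOperators

/-- Objective type of a combinatorial minimization problem:
sum, product, or bottleneck. -/
inductive ObjType where
  | sum : ObjType
  | prod : ObjType
  | bottleneck : ObjType
deriving DecidableEq

/-- The cost `f_c(S)` of a feasible solution `S` under cost function `c`:
the sum, the product, or the maximum (for nonempty `S`) of the element costs. -/
noncomputable def objCost {ι : Type*} (t : ObjType) (c : ι → ℝ) (S : Finset ι) : ℝ :=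
  match t with
  | ObjType.sum => ∑ e ∈ S, c e
  | ObjType.prod => ∏ e ∈ S, c e
  | ObjType.bottleneck => if h : S.Nonempty then S.sup' h c else 0

/-- The optimal objective value `f(I)` of the instance with feasible set `D`. -/
noncomputable def optVal {ι : Type*} (t : ObjType) (c : ι → ℝ) (D : Finset (Finset ι)) : ℝ :=
  if h : D.Nonempty then D.inf' h (objCost t c) else 0

/-- `S` is an optimal solution of the instance `(𝔼, D, c, f)`. -/
def isOpt {ι : Type*} (t : ObjType) (c : ι → ℝ) (D : Finset (Finset ι)) (S : Finset ι) : Prop :=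
  S ∈ D ∧ objCost t c S = optVal t c D

/-- `0 ≤ a < maxdec(e)`, where `maxdec(e) = ∞` for sum/bottleneck objectives and
`maxdec(e) = c(e)` for the product objective. -/
def decOK {ι : Type*} (t : ObjType) (c : ι → ℝ) (e : ι) (a : ℝ) : Prop :=
  0 ≤ a ∧ (t = ObjType.prod → a < c e)

/-- Extended single upper tolerance
`u'(I,e) = sup {α ≥ 0 : every optimal solution of I is optimal for I_{α,e}}` valued in `[0,∞]`. -/
noncomputable def uTol {ι : Type*} [DecidableEq ι] (t : ObjType) (c : ι → ℝ)
    (D : Finset (Finset ι)) (e : ι) : ℝ≥0∞ :=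
  sSup (ENNReal.ofReal '' {a : ℝ | 0 ≤ a ∧
    ∀ S : Finset ι, isOpt t c D S →
      isOpt t (fun x => if x = e then c x + a else c x) D S})

/-- Extended regular set upper tolerance `u'(I,E)`, valued in `[0,∞]`. -/
noncomputable def uTolSet {ι : Type*} [DecidableEq ι] (t : ObjType) (c : ι → ℝ)
    (D : Finset (Finset ι)) (E : Finset ι) : ℝ≥0∞ :=
  sSup (ENNReal.ofReal '' {a : ℝ |
    ∀ S : Finset ι, isOpt t c D S →
      ∃ α : ι → ℝ, (∀ x, 0 ≤ α x) ∧ (∀ x ∉ E, α x = 0) ∧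
        a = ∑ x ∈ E, α x ∧ isOpt t (fun x => c x + α x) D S})

/-- Extended reverse set upper tolerance `u_b'(I,E)`, valued in `[0,∞]` (`inf ∅ = ∞`). -/
noncomputable def uTolSetRev {ι : Type*} [DecidableEq ι] (t : ObjType) (c : ι → ℝ)
    (D : Finset (Finset ι)) (E : Finset ι) : ℝ≥0∞ :=
  sInf (ENNReal.ofReal '' {a : ℝ |
    ∃ S : Finset ι, isOpt t c D S ∧
      ∃ α : ι → ℝ, (∀ x, 0 ≤ α x) ∧ (∀ x ∉ E, α x = 0) ∧
        a = ∑ x ∈ E, α x ∧ ¬ isOpt t (fun x => c x + α x) D S})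

/-- New single lower tolerance
`l'(I,e) = sup {α : 0 ≤ α < maxdec(e), f(I_{−α,e}) = f(I)}`, valued in `[0,∞]`. -/
noncomputable def lTol {ι : Type*} [DecidableEq ι] (t : ObjType) (c : ι → ℝ)
    (D : Finset (Finset ι)) (e : ι) : ℝ≥0∞ :=
  sSup (ENNReal.ofReal '' {a : ℝ | decOK t c e a ∧
    optVal t (fun x => if x = e then c x - a else c x) D = optVal t c D})

/-- New regular set lower tolerance `l'(I,E)`, valued in `[0,∞]`. -/
noncomputable def lTolSet {ι : Type*} [DecidableEq ι] (t : ObjType) (c : ι → ℝ)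
    (D : Finset (Finset ι)) (E : Finset ι) : ℝ≥0∞ :=
  sSup (ENNReal.ofReal '' {a : ℝ |
    ∃ α : ι → ℝ, (∀ x ∈ E, decOK t c x (α x)) ∧ (∀ x ∉ E, α x = 0) ∧
      a = ∑ x ∈ E, α x ∧ optVal t (fun x => c x - α x) D = optVal t c D})

/-- New reverse set lower tolerance `l_b'(I,E)`, valued in `[0,∞]` (`inf ∅ = ∞`). -/
noncomputable def lTolSetRev {ι : Type*} [DecidableEq ι] (t : ObjType) (c : ι → ℝ)
    (D : Finset (Finset ι)) (E : Finset ι) : ℝ≥0∞ :=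
  sInf (ENNReal.ofReal '' {a : ℝ |
    ∃ α : ι → ℝ, (∀ x ∈ E, decOK t c x (α x)) ∧ (∀ x ∉ E, α x = 0) ∧
      a = ∑ x ∈ E, α x ∧ optVal t (fun x => c x - α x) D < optVal t c D})


/-- Theorem 5(a): if `e` lies in every optimal solution, then
`l'(I,e) ∈ {0, ∞}`; moreover, for sum or product objectives `l'(I,e) = 0`. -/
theorem lsi_inside_zero_or_top {ι : Type*} [Fintype ι] [DecidableEq ι]
    (t : ObjType) (c : ι → ℝ) (D : Finset (Finset ι))
    (hD : D.Nonempty) (hSne : ∀ S ∈ D, S.Nonempty)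
    (hpos : t = ObjType.prod → ∀ x, 0 < c x)
    (e : ι) (he : ∀ S : Finset ι, isOpt t c D S → e ∈ S) :
    (lTol t c D e = 0 ∨ lTol t c D e = ⊤) ∧
      ((t = ObjType.sum ∨ t = ObjType.prod) → lTol t c D e = 0) := by
  classical
  set A : Set ℝ := {a : ℝ | decOK t c e a ∧
    optVal t (fun x => if x = e then c x - a else c x) D = optVal t c D} with hA
  have hlt : lTol t c D e = sSup (ENNReal.ofReal '' A) := rfl
  obtain ⟨S₀, hS₀D, hS₀⟩ := Finset.exists_mem_eq_inf' hD (objCost t c)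
  have hoptd : ∀ d : ι → ℝ, optVal t d D = D.inf' hD (objCost t d) :=
    fun _ => dif_pos hD
  have hopt : optVal t c D = D.inf' hD (objCost t c) := hoptd c
  have hS₀opt : isOpt t c D S₀ := ⟨hS₀D, by rw [hopt, hS₀]⟩
  have heS₀ : e ∈ S₀ := he S₀ hS₀opt
  have hzero : (∀ a ∈ A, a ≤ 0) → lTol t c D e = 0 := by
    intro h
    rw [hlt]
    refine le_antisymm (sSup_le ?_) bot_le
    rintro x ⟨a, haA, rfl⟩
    exact le_of_eq (ENNReal.ofReal_eq_zero.mpr (h a haA))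
  have hsp : (t = ObjType.sum ∨ t = ObjType.prod) → ∀ a ∈ A, a ≤ 0 := by
    rintro ht a ⟨⟨ha0, hap⟩, heq⟩
    by_contra hpos'
    push_neg at hpos'
    have hlt' : objCost t (fun x => if x = e then c x - a else c x) S₀
        < objCost t c S₀ := by
      rcases ht with ht | ht <;> subst ht
      · simp only [objCost]
        have hc : ∀ x ∈ S₀, (if x = e then c x - a else c x)
            = c x - (if x = e then a else 0) := by
          intro x _; split <;> simp
        rw [Finset.sum_congr rfl hc, Finset.sum_sub_distrib,
          Finset.sum_ite_eq' S₀ e (fun _ => a), if_pos heS₀]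
        linarith
      · simp only [objCost]
        have hce := hpos rfl
        have hP : 0 < ∏ x ∈ S₀.erase e, c x :=
          Finset.prod_pos fun x _ => hce x
        have h1 : ∏ x ∈ S₀, (if x = e then c x - a else c x)
            = (c e - a) * ∏ x ∈ S₀.erase e, c x := by
          rw [← Finset.mul_prod_erase _ _ heS₀, if_pos rfl]
          congr 1
          exact Finset.prod_congr rfl fun x hx => if_neg (Finset.ne_of_mem_erase hx)
        have h2 : ∏ x ∈ S₀, c x = c e * ∏ x ∈ S₀.erase e, c x :=
          (Finset.mul_prod_erase _ _ heS₀).symm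
        rw [h1, h2]
        have : c e - a < c e := by linarith
        exact mul_lt_mul_of_pos_right this hP
    have hle : optVal t (fun x => if x = e then c x - a else c x) D
        ≤ objCost t (fun x => if x = e then c x - a else c x) S₀ := by
      rw [hoptd]
      exact Finset.inf'_le _ hS₀D
    rw [heq, ← hS₀opt.2] at hle
    exact absurd (lt_of_le_of_lt hle hlt') (lt_irrefl _)
  refine ⟨?_, fun ht => hzero (hsp ht)⟩
  cases t with
  | sum => exact Or.inl (hzero (hsp (Or.inl rfl)))
  | prod => exact Or.inl (hzero (hsp (Or.inr rfl)))
  | bottleneck =>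
    by_cases hex : ∃ a ∈ A, 0 < a
    · right
      obtain ⟨a, ⟨⟨ha0, -⟩, heq⟩, hapos⟩ := hex
      set f : ℝ := D.inf' hD (objCost ObjType.bottleneck c) with hf
      have hcost : ∀ (d : ι → ℝ) (T : Finset ι) (hT : T ∈ D),
          objCost ObjType.bottleneck d T = T.sup' (hSne T hT) d := by
        intro d T hT
        simp only [objCost, dif_pos (hSne T hT)]
      have hS₀le : ∀ x ∈ S₀, c x ≤ f := by
        intro x hx
        have := Finset.le_sup' c hx
        rw [← hcost c S₀ hS₀D, ← hS₀] at this
        exact this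
      have hce : c e ≤ f := hS₀le e heS₀
      have heq' : optVal ObjType.bottleneck
          (fun x => if x = e then c x - a else c x) D = f := by
        rw [heq, hopt]
      have hkey : ∀ T ∈ D, e ∈ T → ∃ x ∈ T, x ≠ e ∧ f ≤ c x := by
        intro T hTD heT
        have h1 : f ≤ objCost ObjType.bottleneck
            (fun x => if x = e then c x - a else c x) T := by
          rw [← heq', hoptd]
          exact Finset.inf'_le _ hTD
        rw [hcost _ T hTD] at h1
        obtain ⟨x, hxT, hxs⟩ :=
          Finset.exists_mem_eq_sup' (hSne T hTD) (fun x => if x = e then c x - a else c x)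
        rw [hxs] at h1
        by_cases hxe : x = e
        · subst hxe
          rw [if_pos rfl] at h1
          linarith [hce]
        · rw [if_neg hxe] at h1
          exact ⟨x, hxT, hxe, h1⟩
      have hall : ∀ b : ℝ, 0 ≤ b → b ∈ A := by
        intro b hb
        refine ⟨⟨hb, fun h => by cases h⟩, ?_⟩
        rw [hoptd, hopt]
        refine le_antisymm ?_ ?_
        · refine le_trans (Finset.inf'_le _ hS₀D) ?_
          rw [hcost _ S₀ hS₀D]
          refine Finset.sup'_le _ _ fun x hx => ?_
          split
          · linarith [hS₀le x hx]
          · exact hS₀le x hx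
        · refine Finset.le_inf' _ _ fun T hTD => ?_
          rw [hcost _ T hTD]
          by_cases heT : e ∈ T
          · obtain ⟨x, hxT, hxe, hfx⟩ := hkey T hTD heT
            refine le_trans ?_ (Finset.le_sup' _ hxT)
            rw [if_neg hxe]
            exact hfx
          · have h2 : f ≤ objCost ObjType.bottleneck c T :=
              Finset.inf'_le _ hTD
            rw [hcost c T hTD] at h2
            refine le_trans h2 (le_of_eq (Finset.sup'_congr _ rfl fun x hx => ?_))
            rw [if_neg (fun h : x = e => heT (h ▸ hx))]
      rw [hlt, sSup_eq_top]
      intro y hy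
      refine ⟨ENNReal.ofReal (y.toReal + 1), ⟨y.toReal + 1,
        hall _ (by positivity), rfl⟩, ?_⟩
      rw [ENNReal.lt_ofReal_iff_toReal_lt hy.ne]
      linarith
    · push_neg at hex
      exact Or.inl (hzero hex)
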